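/- There is no field k (of characteristic 0 or greater than 3) such that every cubic form over k in 3 or more variables is isotropic while there exists an anisotropic cubic form in 2 variables. Equivalently, if there exists an anisotropic binary cubic form over k, then there exists an anisotropic ternary cubic form over k. -/

import Mathlib

open MvPolynomial

/-- A form (polynomial) is anisotropic if its only zero is the trivial one. -/
def Anisotropic {k : Type*} [CommSemiring k] {σ : Type*} (φ : MvPolynomial σ k) : Prop :=
  ∀ x : σ → k, eval x φ = 0 → x = 0

private lemma fin2_degree_eq {v : Fin 2 →₀ ℕ} : v.degree = v 0 + v 1 := by
  rw [Finsupp.degree, ← Fin.sum_univ_two (fun i => v i)]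
  exact Finset.sum_subset (Finset.subset_univ _)
    (fun i _ h => Finsupp.notMem_support_iff.mp h)

private lemma aeval_monomial_X1 {k : Type*} [CommRing k] (v : Fin 2 →₀ ℕ) (a : k) :
    (MvPolynomial.aeval ![(Polynomial.X : Polynomial k), 1] (monomial v a))
      = Polynomial.C a * Polynomial.X ^ (v 0) := by
  rw [MvPolynomial.aeval_monomial]
  rw [Finsupp.prod_fintype _ _ (by intro i; simp)]
  rw [Fin.prod_univ_two]
  simp [Polynomial.algebraMap_eq]

private lemma coeff_aeval_homog {k : Type*} [CommRing k] (f : MvPolynomial (Fin 2) k)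
    (hf : f.IsHomogeneous 3) {n : ℕ} (hn : 3 ≤ n) :
    (MvPolynomial.aeval ![(Polynomial.X : Polynomial k), 1] f).coeff n
      = if n = 3 then MvPolynomial.eval ![(1 : k), 0] f else 0 := by
  have hsup : ∀ v ∈ f.support, v 0 + v 1 = 3 := by
    intro v hv
    by_contra h
    exact (mem_support_iff.mp hv) (hf.coeff_eq_zero (by rwa [fin2_degree_eq]))
  conv_lhs => rw [f.as_sum]
  rw [map_sum, Polynomial.finset_sum_coeff]
  split_ifs with h3
  · subst h3
    conv_rhs => rw [f.as_sum]
    rw [map_sum]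
    refine Finset.sum_congr rfl (fun v hv => ?_)
    rw [aeval_monomial_X1, Polynomial.coeff_C_mul, Polynomial.coeff_X_pow]
    rw [MvPolynomial.eval_monomial]
    rw [Finsupp.prod_fintype _ _ (by intro i; simp), Fin.prod_univ_two]
    have hv3 := hsup v hv
    by_cases h0 : v 1 = 0
    · have : v 0 = 3 := by omega
      simp [this, h0]
    · have : v 0 ≠ 3 := by omega
      simp [Ne.symm this, h0, zero_pow h0]
  · refine Finset.sum_eq_zero (fun v hv => ?_)
    rw [aeval_monomial_X1, Polynomial.coeff_C_mul, Polynomial.coeff_X_pow]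
    have hv3 := hsup v hv
    have : n ≠ v 0 := by omega
    simp [this]

theorem stmt_2 {k : Type*} [Field k]
    (hchar : ∀ p : ℕ, CharP k p → p = 0 ∨ 3 < p)
    (f : MvPolynomial (Fin 2) k) (hf : f.IsHomogeneous 3) (hfa : Anisotropic f) :
    ∃ g : MvPolynomial (Fin 3) k, g.IsHomogeneous 3 ∧ Anisotropic g := by
  classical
  -- the coefficient of X₀³, i.e. `f (1,0)`, is nonzero
  have h10 : MvPolynomial.eval ![(1 : k), 0] f ≠ 0 := by
    intro h
    have h0 := hfa _ h
    have h1 : (1 : k) = 0 := by simpa using congrFun h0 0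
    exact one_ne_zero h1
  -- the dehomogenization F(t) = f(t, 1)
  set F : Polynomial k := MvPolynomial.aeval ![(Polynomial.X : Polynomial k), 1] f with hFdef
  have hc3 : F.coeff 3 = MvPolynomial.eval ![(1 : k), 0] f := by
    simpa using coeff_aeval_homog f hf (le_refl 3)
  have hcn : ∀ n, 3 < n → F.coeff n = 0 := by
    intro n hn
    have := coeff_aeval_homog f hf hn.le
    simpa [Nat.ne_of_gt hn] using this
  have hdeg : F.natDegree = 3 := by
    refine le_antisymm (Polynomial.natDegree_le_iff_coeff_eq_zero.mpr hcn) ?_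
    exact Polynomial.le_natDegree_of_ne_zero (hc3 ▸ h10)
  have hF0 : F ≠ 0 := by
    intro h
    exact h10 (by rw [← hc3, h, Polynomial.coeff_zero])
  -- evaluation of F
  have heval : ∀ a : k, Polynomial.eval a F = MvPolynomial.eval ![a, 1] f := by
    intro a
    rw [hFdef, MvPolynomial.aeval_def,
      show (Polynomial.eval a : Polynomial k → k) = Polynomial.evalRingHom a from rfl,
      MvPolynomial.eval₂_comp_left (Polynomial.evalRingHom a)]
    have h1 : (Polynomial.evalRingHom a).comp (algebraMap k (Polynomial k)) = RingHom.id k := by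
      ext r; simp
    rw [h1]
    rw [show ((Polynomial.evalRingHom a) ∘ ![(Polynomial.X : Polynomial k), 1] : Fin 2 → k)
      = ![a, 1] by funext i; fin_cases i <;> simp]
    rfl
  -- F is irreducible since it is a cubic without roots
  have hirr : Irreducible F := by
    rw [Polynomial.irreducible_iff_roots_eq_zero_of_degree_le_three (by omega) (by omega)]
    rw [Multiset.eq_zero_iff_forall_notMem]
    intro a ha
    rw [Polynomial.mem_roots hF0] at ha
    have hz : MvPolynomial.eval ![a, 1] f = 0 := by rw [← heval a]; exact ha
    have h0 := hfa _ hz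
    have h1 : (1 : k) = 0 := by simpa using congrFun h0 1
    exact one_ne_zero h1
  haveI := Fact.mk hirr
  -- the cubic field extension l = k[t]/(F)
  let l := AdjoinRoot F
  let pb : PowerBasis k l := AdjoinRoot.powerBasis hF0
  have hdim : pb.dim = 3 := hdeg
  let B : Module.Basis (Fin 3) k l := pb.basis.reindex (finCongr hdim)
  -- the ternary norm form
  let A : Fin 3 → Matrix (Fin 3) (Fin 3) k := fun m => Algebra.leftMulMatrix B (B m)
  let M : Matrix (Fin 3) (Fin 3) (MvPolynomial (Fin 3) k) :=
    Matrix.of fun i j => ∑ m, MvPolynomial.C (A m i j) * MvPolynomial.X m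
  have hMentry : ∀ i j, (M i j).IsHomogeneous 1 := by
    intro i j
    show (∑ m, MvPolynomial.C (A m i j) * MvPolynomial.X m).IsHomogeneous 1
    exact IsHomogeneous.sum _ _ _ (fun m _ => MvPolynomial.isHomogeneous_C_mul_X _ _)
  refine ⟨M.det, ?_, ?_⟩
  · -- homogeneity of degree 3
    rw [Matrix.det_apply]
    refine IsHomogeneous.sum _ _ _ (fun σ _ => ?_)
    have hprod : (∏ i, M (σ i) i).IsHomogeneous 3 := by
      have := IsHomogeneous.prod Finset.univ (fun i => M (σ i) i) (fun _ => 1)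
        (fun i _ => hMentry (σ i) i)
      simpa using this
    rcases Int.units_eq_one_or (Equiv.Perm.sign σ) with h | h <;> rw [h]
    · simpa using hprod
    · have : ((-1 : ℤˣ) • ∏ i, M (σ i) i) = -(∏ i, M (σ i) i) := by
        rw [Units.smul_def]; push_cast; rw [neg_one_zsmul]
      rw [this]
      exact hprod.neg
  · -- anisotropy
    intro x hx
    set v : l := ∑ m, x m • B m with hv
    have hdet : MvPolynomial.eval x M.det = (Algebra.leftMulMatrix B v).det := by
      rw [RingHom.map_det (MvPolynomial.eval x)]
      congr 1
      ext i j
      have hlm : Algebra.leftMulMatrix B v = ∑ m, x m • A m := by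
        rw [hv, map_sum]
        refine Finset.sum_congr rfl (fun m _ => ?_)
        rw [map_smul]
      rw [RingHom.mapMatrix_apply, Matrix.map_apply, hlm, Matrix.sum_apply]
      rw [show M i j = ∑ m, MvPolynomial.C (A m i j) * MvPolynomial.X m from rfl]
      rw [map_sum]
      refine Finset.sum_congr rfl (fun m _ => ?_)
      rw [Matrix.smul_apply, smul_eq_mul, map_mul, MvPolynomial.eval_C, MvPolynomial.eval_X,
        mul_comm]
    have hnorm : Algebra.norm k v = 0 := by
      rw [Algebra.norm_eq_matrix_det B, ← hdet, hx]
    have hv0 : v = 0 := (Algebra.norm_eq_zero_iff_of_basis B).mp hnorm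
    have hsymm : B.equivFun.symm x = 0 := by
      rwa [B.equivFun_symm_apply]
    have : x = 0 := by
      have := B.equivFun.symm.injective (by rw [hsymm, map_zero] : B.equivFun.symm x = B.equivFun.symm 0)
      exact this
    exact this
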